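/- Let Γ = (V,E) be a reflexive locally finite k-separable relation and let A be a k-atom (a k-fragment of minimum cardinality) with |A| > k. Then for every x ∈ A, the set Γ⁻(x) ∩ A contains an element other than x, i.e., some other element of A maps to x under Γ. -/

import Mathlib

variable {V : Type*}

/-- Image of a set under a relation. -/
def GImg (E : V → V → Prop) (X : Set V) : Set V := {y | ∃ x ∈ X, E x y}

/-- Board (boundary) of a set. -/
def GBd (E : V → V → Prop) (X : Set V) : Set V := GImg E X \ X

/-- Exterior of a set. -/
def GExt (E : V → V → Prop) (X : Set V) : Set V := (GImg E X)ᶜ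

/-- Reverse relation. -/
def GRev (E : V → V → Prop) : V → V → Prop := fun x y => E y x

/-- Reflexivity. -/
def GRefl (E : V → V → Prop) : Prop := ∀ x, E x x

/-- Local finiteness. -/
def GLocFin (E : V → V → Prop) : Prop :=
  ∀ x : V, {y | E x y}.Finite ∧ {y | E y x}.Finite

/-- k-separability. -/
def GSep (E : V → V → Prop) (k : ℕ) : Prop :=
  ∃ X : Set V, X.Finite ∧ k ≤ X.ncard ∧ k ≤ (GExt E X).ncard

/-- The k-th connectivity. -/
noncomputable def GKappa (E : V → V → Prop) (k : ℕ) : ℕ :=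
  sInf {n | ∃ X : Set V, X.Finite ∧ k ≤ X.ncard ∧ k ≤ (GExt E X).ncard ∧ (GBd E X).ncard = n}

/-- k-fragments. -/
def GFrag (E : V → V → Prop) (k : ℕ) (X : Set V) : Prop :=
  X.Finite ∧ k ≤ X.ncard ∧ k ≤ (GExt E X).ncard ∧ (GBd E X).ncard = GKappa E k

/-- k-atoms: k-fragments of minimal cardinality. -/
def GAtom (E : V → V → Prop) (k : ℕ) (X : Set V) : Prop :=
  GFrag E k X ∧ ∀ Y : Set V, GFrag E k Y → X.ncard ≤ Y.ncard

/-- k-faithful: every k-atom A satisfies |A| ≤ |∇(A)|. -/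
def GFaithful (E : V → V → Prop) (k : ℕ) : Prop :=
  ∀ A : Set V, GAtom E k A → A.ncard ≤ (GExt E A).ncard

theorem stmt11 {V : Type*} (E : V → V → Prop) (hrefl : GRefl E) (hloc : GLocFin E)
    (k : ℕ) (hk : 1 ≤ k) (hsep : GSep E k) (A : Set V) (hA : GAtom E k A)
    (hbig : k < A.ncard) :
    ∀ x ∈ A, ∃ y ∈ A, y ≠ x ∧ E y x := by
  intro x hx
  by_contra hcon
  push_neg at hcon
  obtain ⟨⟨hfin, hkA, hkExt, hbd⟩, hmin⟩ := hA
  set A' : Set V := A \ {x} with hA'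
  have hfin' : A'.Finite := hfin.diff
  have hcard' : A'.ncard = A.ncard - 1 := Set.ncard_diff_singleton_of_mem hx
  have hkA' : k ≤ A'.ncard := by omega
  -- GImg A' ⊆ GImg A hence GExt A ⊆ GExt A'
  have himg : GImg E A' ⊆ GImg E A := by
    rintro y ⟨z, hz, hzy⟩; exact ⟨z, hz.1, hzy⟩
  have hextsub : GExt E A ⊆ GExt E A' := fun y hy h => hy (himg h)
  -- GExt E A is finite
  have hExtFin : (GExt E A).Finite := by
    by_contra h
    have := Set.Infinite.ncard h
    omega
  -- GExt A' ⊆ GExt A ∪ {y | E x y}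
  have hextsub2 : GExt E A' ⊆ GExt E A ∪ {y | E x y} := by
    intro y hy
    by_cases hyA : y ∈ GExt E A
    · exact Or.inl hyA
    · right
      have : y ∈ GImg E A := not_not.mp hyA
      obtain ⟨z, hzA, hzy⟩ := this
      by_cases hzx : z = x
      · exact hzx ▸ hzy
      · exact absurd ⟨z, ⟨hzA, hzx⟩, hzy⟩ hy
  have hExtFin' : (GExt E A').Finite := (hExtFin.union (hloc x).1).subset hextsub2
  have hkExt' : k ≤ (GExt E A').ncard :=
    le_trans hkExt (Set.ncard_le_ncard hextsub hExtFin')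
  -- GImg A is finite
  have hImgFin : (GImg E A).Finite := by
    have : GImg E A ⊆ ⋃ z ∈ A, {y | E z y} := by
      rintro y ⟨z, hz, hzy⟩
      exact Set.mem_biUnion hz hzy
    exact (hfin.biUnion fun z _ => (hloc z).1).subset this
  have hBdFin : (GBd E A).Finite := hImgFin.diff
  -- GBd A' ⊆ GBd A
  have hbdsub : GBd E A' ⊆ GBd E A := by
    rintro z ⟨hzimg, hzA'⟩
    refine ⟨himg hzimg, fun hzA => ?_⟩
    by_cases hzx : z = x
    · subst hzx
      obtain ⟨y, hy, hyz⟩ := hzimg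
      exact hcon y hy.1 hy.2 hyz
    · exact hzA' ⟨hzA, hzx⟩
  have hle : (GBd E A').ncard ≤ GKappa E k := hbd ▸ Set.ncard_le_ncard hbdsub hBdFin
  have hge : GKappa E k ≤ (GBd E A').ncard :=
    Nat.sInf_le ⟨A', hfin', hkA', hkExt', rfl⟩
  have hfrag' : GFrag E k A' := ⟨hfin', hkA', hkExt', le_antisymm hle hge⟩
  have := hmin A' hfrag'
  omega
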